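/- arXiv:1710.02328 — 2 statements merged into one kernel-verified Lean document; each statement's English description precedes it below -/
import Mathlib

section
/- If A is a commutative k-algebra that is separable, i.e., the multiplication map A ⊗_k A → A has a section as a map of A-bimodules, then the module of Kähler differentials Ω¹_{A|k} is zero. -/
open scoped TensorProduct

/-- If a commutative `k`-algebra `A` is separable, i.e. the multiplication map
`μ : A ⊗_k A → A` has a section as a map of `A`-bimodules, then the module of Kähler
differentials `Ω¹_{A|k}` is zero. -/
theorem kaehler_eq_zero_of_separable
    (k A : Type*) [CommRing k] [CommRing A] [Algebra k A]
    (s : A →ₗ[k] A ⊗[k] A)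
    (hsec : ∀ x : A, Algebra.TensorProduct.lmul' k (s x) = x)
    (hbimod : ∀ a b x : A, s (a * x * b) = (a ⊗ₜ[k] b) * s x) :
    Subsingleton (Ω[A⁄k]) := by
  rw [KaehlerDifferential]
  rw [Ideal.cotangent_subsingleton_iff]
  have key : ∀ z : A ⊗[k] A, z * s 1 = s (Algebra.TensorProduct.lmul' k z) := by
    intro z
    induction z using TensorProduct.induction_on with
    | zero => simp
    | tmul a b =>
        rw [Algebra.TensorProduct.lmul'_apply_tmul]
        have := hbimod a b 1
        rw [mul_one] at this
        exact this.symm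
    | add x y hx hy => rw [add_mul, map_add, map_add, hx, hy]
  have h1e : (1 : A ⊗[k] A) - s 1 ∈ KaehlerDifferential.ideal k A := by
    simp only [KaehlerDifferential.ideal, RingHom.mem_ker, map_sub, map_one, hsec, sub_self]
  unfold IsIdempotentElem
  refine le_antisymm (Ideal.mul_le_right) fun z hz => ?_
  have hz0 : s (Algebra.TensorProduct.lmul' k z) = 0 := by
    have : Algebra.TensorProduct.lmul' (S := A) k z = 0 := hz
    rw [this, map_zero]
  have : z = z * ((1 : A ⊗[k] A) - s 1) := by
    rw [mul_sub, mul_one, key, hz0, sub_zero]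
  rw [this]
  exact Ideal.mul_mem_mul hz h1e
end

section
/- The map h : ℤ[1/2, i] ⊗_{ℤ[1/2]} ℤ[1/2, i] → ℤ[1/2, i] × ℤ[1/2, i], given by h(a ⊗ b) = (a·b, a·σ(b)) where σ is complex conjugation, is an isomorphism. -/
open Polynomial
open scoped TensorProduct

/-- `ℤ[1/2]`. -/
abbrev ZHalf : Type := Localization.Away (2 : ℤ)

/-- `ℤ[1/2, i] = ℤ[1/2][x]/(x² + 1)`. -/
abbrev ZHalfI : Type := AdjoinRoot ((X : ZHalf[X]) ^ 2 + 1)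

/-- Complex conjugation on `ℤ[1/2, i]`, sending `i` to `-i`. -/
noncomputable def conjZHalfI : ZHalfI →ₐ[ZHalf] ZHalfI :=
  AdjoinRoot.liftAlgHom ((X : ZHalf[X]) ^ 2 + 1) (Algebra.ofId _ _) (-(AdjoinRoot.root _)) (by
    have h : (Polynomial.aeval (AdjoinRoot.root ((X : ZHalf[X]) ^ 2 + 1)))
        ((X : ZHalf[X]) ^ 2 + 1) = 0 := by
      rw [AdjoinRoot.aeval_eq, AdjoinRoot.mk_self]
    show (Polynomial.aeval (-(AdjoinRoot.root ((X : ZHalf[X]) ^ 2 + 1))))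
        ((X : ZHalf[X]) ^ 2 + 1) = 0
    simp only [map_add, map_pow, map_one, Polynomial.aeval_X, neg_sq] at h ⊢
    exact h)

/-- The map `h : ℤ[1/2, i] ⊗_{ℤ[1/2]} ℤ[1/2, i] → ℤ[1/2, i] × ℤ[1/2, i]`,
`a ⊗ b ↦ (a·b, a·σ(b))`. -/
noncomputable def galoisMapZHalfI :
    ZHalfI ⊗[ZHalf] ZHalfI →ₐ[ZHalf] ZHalfI × ZHalfI :=
  AlgHom.prod (Algebra.TensorProduct.lmul' ZHalf)
    (Algebra.TensorProduct.productMap (AlgHom.id ZHalf ZHalfI) conjZHalfI)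

noncomputable abbrev iZH : ZHalfI := AdjoinRoot.root _

lemma i_sq : iZH * iZH = -1 := by
  have h : (AdjoinRoot.mk ((X : ZHalf[X]) ^ 2 + 1)) ((X : ZHalf[X]) ^ 2 + 1) = 0 :=
    AdjoinRoot.mk_self
  simp only [map_add, map_pow, map_one, AdjoinRoot.mk_X] at h
  have h2 := eq_neg_of_add_eq_zero_left h
  rw [← sq]
  exact h2

lemma conj_i : conjZHalfI iZH = -iZH := by
  simp [conjZHalfI, AdjoinRoot.liftAlgHom_root]

lemma two_unit : ∃ c : ZHalf, 2 * c = 1 := by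
  have h1 : IsUnit (algebraMap ℤ ZHalf 2) :=
    IsLocalization.map_units (M := Submonoid.powers (2:ℤ)) _ ⟨2, Submonoid.mem_powers 2⟩
  obtain ⟨u, hu⟩ := h1
  refine ⟨u.inv, ?_⟩
  have h2 : (algebraMap ℤ ZHalf 2) = (2 : ZHalf) := by rw [map_ofNat]
  rw [← h2, ← hu]; exact u.mul_inv

lemma monic_f : ((X : ZHalf[X]) ^ 2 + 1).Monic :=
  Polynomial.monic_X_pow_add (lt_of_le_of_lt degree_one_le (by norm_num))

lemma galois_apply (a b : ZHalfI) :
    galoisMapZHalfI (a ⊗ₜ b) = (a * b, a * conjZHalfI b) := by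
  simp [galoisMapZHalfI, Algebra.TensorProduct.lmul'_apply_tmul,
    Algebra.TensorProduct.productMap_apply_tmul]

noncomputable def gInv (c : ZHalf) : ZHalfI × ZHalfI →ₗ[ZHalf] ZHalfI ⊗[ZHalf] ZHalfI :=
  LinearMap.coprod
    (((TensorProduct.mk ZHalf ZHalfI ZHalfI).flip 1).comp
        (LinearMap.mulLeft ZHalf (algebraMap ZHalf ZHalfI c)) +
      ((TensorProduct.mk ZHalf ZHalfI ZHalfI).flip iZH).comp
        (LinearMap.mulLeft ZHalf (-(algebraMap ZHalf ZHalfI c * iZH))))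
    (((TensorProduct.mk ZHalf ZHalfI ZHalfI).flip 1).comp
        (LinearMap.mulLeft ZHalf (algebraMap ZHalf ZHalfI c)) +
      ((TensorProduct.mk ZHalf ZHalfI ZHalfI).flip iZH).comp
        (LinearMap.mulLeft ZHalf (algebraMap ZHalf ZHalfI c * iZH)))

lemma gInv_apply (c : ZHalf) (x y : ZHalfI) :
    gInv c (x, y) = (algebraMap ZHalf ZHalfI c * x) ⊗ₜ 1 +
      (-((algebraMap ZHalf ZHalfI c * (iZH * x)) ⊗ₜ iZH)) +
      ((algebraMap ZHalf ZHalfI c * y) ⊗ₜ 1 +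
      (algebraMap ZHalf ZHalfI c * (iZH * y)) ⊗ₜ iZH) := by
  simp [gInv, mul_assoc]

/-- The map `h : ℤ[1/2, i] ⊗_{ℤ[1/2]} ℤ[1/2, i] → ℤ[1/2, i] × ℤ[1/2, i]`,
`a ⊗ b ↦ (a·b, a·σ(b))`, is an isomorphism. -/
theorem galoisMapZHalfI_bijective : Function.Bijective galoisMapZHalfI := by
  obtain ⟨c, hc⟩ := two_unit
  have hc2 : 2 * (algebraMap ZHalf ZHalfI c) = 1 := by
    rw [← map_ofNat (algebraMap ZHalf ZHalfI) 2, ← map_mul, hc, map_one]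
  set c' : ZHalfI := algebraMap ZHalf ZHalfI c with hc'
  -- right inverse: h ∘ g = id
  have hright : ∀ x y : ZHalfI, galoisMapZHalfI (gInv c (x, y)) = (x, y) := by
    intro x y
    rw [gInv_apply]
    simp only [map_add, map_neg, galois_apply, map_one, conj_i, Prod.mk_add_mk,
      Prod.neg_mk, Prod.mk.injEq, ← hc']
    constructor
    · linear_combination x * hc2 + (c' * y - c' * x) * i_sq
    · linear_combination y * hc2 + (c' * x - c' * y) * i_sq
  have hsurj : Function.Surjective galoisMapZHalfI := fun p => ⟨gInv c p, by
    obtain ⟨x, y⟩ := p; exact hright x y⟩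
  -- gInv is surjective
  have hmem1 : ∀ a : ZHalfI, a ⊗ₜ[ZHalf] (1 : ZHalfI) ∈ LinearMap.range (gInv c) := by
    intro a
    refine ⟨(a, a), ?_⟩
    rw [gInv_apply, ← hc']
    have e0 : c' * a + c' * a = a := by linear_combination a * hc2
    calc _ = (c' * a + c' * a) ⊗ₜ[ZHalf] (1:ZHalfI) := by
          rw [TensorProduct.add_tmul]; ring
      _ = a ⊗ₜ 1 := by rw [e0]
  have hmemi : ∀ a : ZHalfI, a ⊗ₜ[ZHalf] iZH ∈ LinearMap.range (gInv c) := by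
    intro a
    refine ⟨(iZH * a, -(iZH * a)), ?_⟩
    rw [gInv_apply, ← hc']
    have e0 : c' * (iZH * a) + c' * -(iZH * a) = 0 := by ring
    have e1 : c' * (iZH * -(iZH * a)) - c' * (iZH * (iZH * a)) = a := by
      linear_combination (-2 * c' * a) * i_sq + a * hc2
    calc _ = (c' * (iZH * a) + c' * -(iZH * a)) ⊗ₜ[ZHalf] (1:ZHalfI) +
            ((c' * (iZH * -(iZH * a)) - c' * (iZH * (iZH * a))) ⊗ₜ[ZHalf] iZH) := by
          rw [TensorProduct.add_tmul, TensorProduct.sub_tmul]; ring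
      _ = a ⊗ₜ iZH := by rw [e0, e1, TensorProduct.zero_tmul, zero_add]
  have hpow : ∀ (k : ℕ) (a : ZHalfI), a ⊗ₜ[ZHalf] (iZH ^ k) ∈ LinearMap.range (gInv c) := by
    intro k
    induction k using Nat.strong_induction_on with
    | _ k ih =>
      match k with
      | 0 => intro a; simpa using hmem1 a
      | 1 => intro a; simpa using hmemi a
      | (k+2) =>
        intro a
        have hk : iZH ^ (k + 2) = -(iZH ^ k) := by
          linear_combination (iZH ^ k) * i_sq
        rw [hk, TensorProduct.tmul_neg]
        exact neg_mem (ih k (by omega) a)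
  have hgsurj : Function.Surjective (gInv c) := by
    rw [← LinearMap.range_eq_top]
    rw [eq_top_iff]
    rintro t -
    induction t using TensorProduct.induction_on with
    | zero => exact zero_mem _
    | tmul a b =>
      have hb := (AdjoinRoot.powerBasis' monic_f).basis.sum_repr b
      rw [← hb, TensorProduct.tmul_sum]
      refine Submodule.sum_mem _ fun i _ => ?_
      rw [TensorProduct.tmul_smul]
      refine Submodule.smul_mem _ _ ?_
      rw [(AdjoinRoot.powerBasis' monic_f).basis_eq_pow]
      exact hpow _ a
    | add x y hx hy => exact add_mem hx hy
  -- Noetherian argument for injectivity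
  haveI hNoeth : IsNoetherianRing ZHalf :=
    IsLocalization.isNoetherianRing (Submonoid.powers (2:ℤ)) _ inferInstance
  haveI hfin : Module.Finite ZHalf ZHalfI :=
    Module.Finite.of_basis (AdjoinRoot.powerBasis' monic_f).basis
  haveI : Module.Finite ZHalf (ZHalfI ⊗[ZHalf] ZHalfI) := Module.Finite.tensorProduct _ _ _
  haveI : IsNoetherian ZHalf (ZHalfI ⊗[ZHalf] ZHalfI) := inferInstance
  have hcomp : Function.Surjective ((gInv c) ∘ₗ galoisMapZHalfI.toLinearMap) := by
    intro t
    obtain ⟨p, hp⟩ := hgsurj t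
    obtain ⟨s, hs⟩ := hsurj p
    exact ⟨s, by simp [LinearMap.comp_apply, hs, hp]⟩
  have hinj2 := IsNoetherian.injective_of_surjective_endomorphism _ hcomp
  refine ⟨fun t t' e => hinj2 ?_, hsurj⟩
  simp only [LinearMap.comp_apply, AlgHom.toLinearMap_apply, e]
end
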